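/- arXiv:2510.16919 — 5 statements merged into one kernel-verified Lean document; each statement's English description precedes it below -/
import Mathlib

section
/- The fiber W_E decomposes orthogonally as W_E = ι(F) ⊕ E^{3/2}: the kernel of γ equals the orthogonal complement of the range of ι in W_E, where E^{3/2} := ker γ. -/
noncomputable section

variable {V E F : Type*}
  [NormedAddCommGroup V] [InnerProductSpace ℝ V]
  [NormedAddCommGroup E] [InnerProductSpace ℂ E] [FiniteDimensional ℂ E]
  [NormedAddCommGroup F] [InnerProductSpace ℂ F] [FiniteDimensional ℂ F]

/-- `γ : W_E → F`, `γ(Φ) = ∑ i, σ(e_i)(Φ_i)`. -/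
def gam {n : ℕ} (σ : V →ₗ[ℝ] (E →ₗ[ℂ] F)) (e : OrthonormalBasis (Fin n) ℝ V)
    (Φ : Fin n → E) : F :=
  ∑ i, σ (e i) (Φ i)

/-- `ι : F → W_E`, `(ι f)_i = (1/n)·σ(e_i)*(f)`. -/
def iot {n : ℕ} (σ : V →ₗ[ℝ] (E →ₗ[ℂ] F)) (e : OrthonormalBasis (Fin n) ℝ V)
    (f : F) : Fin n → E :=
  fun i => (1 / (n : ℂ)) • LinearMap.adjoint (σ (e i)) f

/-- `γ̃ : W_F → E`, `γ̃(Ψ) = ∑ i, σ(e_i)*(Ψ_i)`. -/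
def gamT {n : ℕ} (σ : V →ₗ[ℝ] (E →ₗ[ℂ] F)) (e : OrthonormalBasis (Fin n) ℝ V)
    (Ψ : Fin n → F) : E :=
  ∑ i, LinearMap.adjoint (σ (e i)) (Ψ i)

/-- `ι̃ : E → W_F`, `(ι̃ v)_i = (1/n)·σ(e_i)(v)`. -/
def iotT {n : ℕ} (σ : V →ₗ[ℝ] (E →ₗ[ℂ] F)) (e : OrthonormalBasis (Fin n) ℝ V)
    (v : E) : Fin n → F :=
  fun i => (1 / (n : ℂ)) • σ (e i) v

/-- `ξ ⊗ v ∈ W_E`, `(ξ⊗v)_i = ⟨ξ,e_i⟩·v`. -/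
def tensOf {n : ℕ} (e : OrthonormalBasis (Fin n) ℝ V) (ξ : V) (v : E) : Fin n → E :=
  fun i => (inner ℝ ξ (e i) : ℝ) • v

/-- the contraction `ξ ⌟ Φ = ∑ i, ⟨ξ,e_i⟩·Φ_i`. -/
def contr {n : ℕ} (e : OrthonormalBasis (Fin n) ℝ V) (ξ : V) (Φ : Fin n → E) : E :=
  ∑ i, (inner ℝ ξ (e i) : ℝ) • Φ i

/-- Orthogonal decomposition `W_E = ι(F) ⊕ E^{3/2}` with `E^{3/2} = ker γ`:
the kernel of `γ` equals the orthogonal complement of the range of `ι` in `W_E`, i.e.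
`γ(Φ) = 0` if and only if `Φ` is orthogonal to `ι(f)` for every `f ∈ F`. -/
theorem ker_gamma_eq_orthogonal_range_iota
    (n : ℕ) (hn : 3 ≤ n) (e : OrthonormalBasis (Fin n) ℝ V)
    (σ : V →ₗ[ℝ] (E →ₗ[ℂ] F))
    (hcl : ∀ ξ η : V, ∀ v : E,
      LinearMap.adjoint (σ ξ) (σ η v) + LinearMap.adjoint (σ η) (σ ξ v)
        = (2 * (inner ℝ ξ η : ℝ)) • v) :
    ∀ Φ : Fin n → E,
      gam σ e Φ = 0 ↔ ∀ f : F, ∑ i, (inner ℂ (iot σ e f i) (Φ i) : ℂ) = 0 := by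
  intro Φ
  have key : ∀ f : F, ∑ i, (inner ℂ (iot σ e f i) (Φ i) : ℂ)
      = (1 / (n : ℂ)) * inner ℂ f (gam σ e Φ) := by
    intro f
    simp only [iot, inner_smul_left, LinearMap.adjoint_inner_left, gam, inner_sum]
    rw [Finset.mul_sum]
    congr 1; ext i
    congr 1
    simp [Complex.ext_iff]
  have hn0 : (1 / (n : ℂ)) ≠ 0 := by
    have : (n : ℂ) ≠ 0 := by exact_mod_cast (show n ≠ 0 by omega)
    simpa using this
  constructor
  · intro h f; rw [key, h]; simp
  · intro h
    have := h (gam σ e Φ)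
    rw [key] at this
    rcases mul_eq_zero.mp this with h1 | h1
    · exact absurd h1 hn0
    · exact inner_self_eq_zero.mp h1
end
end

section
/- For every ξ ∈ V and every Φ ∈ ker γ one has (id⊗σ(ξ)*)((id − ι̃∘γ̃)((id⊗σ(ξ))(Φ))) = ‖ξ‖²·Φ − 2·(id⊗σ(ξ)*)(ι̃(ξ⌟Φ)). -/
noncomputable section

variable {V E F : Type*}
  [NormedAddCommGroup V] [InnerProductSpace ℝ V]
  [NormedAddCommGroup E] [InnerProductSpace ℂ E] [FiniteDimensional ℂ E]
  [NormedAddCommGroup F] [InnerProductSpace ℂ F] [FiniteDimensional ℂ F]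

/-- For every `ξ ∈ V` and every `Φ ∈ ker γ`,
`(id⊗σ(ξ)*)((id − ι̃∘γ̃)((id⊗σ(ξ))(Φ))) = ‖ξ‖²·Φ − 2·(id⊗σ(ξ)*)(ι̃(ξ⌟Φ))`. -/
theorem symbol_computation_on_ker_gamma
    (n : ℕ) (hn : 3 ≤ n) (e : OrthonormalBasis (Fin n) ℝ V)
    (σ : V →ₗ[ℝ] (E →ₗ[ℂ] F))
    (hcl : ∀ ξ η : V, ∀ v : E,
      LinearMap.adjoint (σ ξ) (σ η v) + LinearMap.adjoint (σ η) (σ ξ v)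
        = (2 * (inner ℝ ξ η : ℝ)) • v) :
    ∀ (ξ : V) (Φ : Fin n → E), gam σ e Φ = 0 →
      (fun i => LinearMap.adjoint (σ ξ)
          ((fun j => σ ξ (Φ j)) i - iotT σ e (gamT σ e (fun j => σ ξ (Φ j))) i))
        = ‖ξ‖ ^ 2 • Φ
            - (2 : ℝ) • fun i => LinearMap.adjoint (σ ξ) (iotT σ e (contr e ξ Φ) i) := by
  intro ξ Φ hΦ
  -- key: γ̃(σξΦ) = 2 • contr
  have hgamT : gamT σ e (fun j => σ ξ (Φ j)) = (2 : ℝ) • contr e ξ Φ := by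
    have h1 : ∀ j, LinearMap.adjoint (σ (e j)) (σ ξ (Φ j))
        = (2 * (inner ℝ ξ (e j) : ℝ)) • Φ j - LinearMap.adjoint (σ ξ) (σ (e j) (Φ j)) := by
      intro j
      have := hcl ξ (e j) (Φ j)
      rw [eq_sub_iff_add_eq, add_comm]
      exact this
    unfold gamT
    simp only [h1]
    rw [Finset.sum_sub_distrib, ← map_sum]
    have : (∑ j, σ (e j) (Φ j)) = gam σ e Φ := rfl
    rw [this, hΦ, map_zero, sub_zero]
    unfold contr
    rw [Finset.smul_sum]
    congr 1; funext j
    rw [smul_smul]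
  have hss : ∀ v : E, LinearMap.adjoint (σ ξ) (σ ξ v) = (‖ξ‖ ^ 2 : ℝ) • v := by
    intro v
    have := hcl ξ ξ v
    rw [← two_smul ℝ] at this
    have h2 : (2 * (inner ℝ ξ ξ : ℝ)) • v = (2 : ℝ) • ((inner ℝ ξ ξ : ℝ) • v) := by
      rw [smul_smul]
    rw [h2] at this
    have := smul_right_injective E (two_ne_zero (α := ℝ)) this
    rw [this, real_inner_self_eq_norm_sq]
  funext i
  simp only [hgamT, iotT, Pi.sub_apply, Pi.smul_apply]
  rw [map_sub, hss]
  congr 1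
  rw [LinearMap.map_smul_of_tower (σ (e i)) (2 : ℝ), smul_comm ((1:ℂ)/n) (2:ℝ),
    LinearMap.map_smul_of_tower (LinearMap.adjoint (σ ξ)) (2 : ℝ)]
end
end

section
/- For every ξ ∈ V and every Φ ∈ ker γ with ξ⌟Φ = 0 one has (id − ι∘γ)((id⊗σ(ξ)*)((id − ι̃∘γ̃)((id⊗σ(ξ))(Φ)))) = ‖ξ‖²·Φ; that is, σ_{3/2}(ξ)* σ_{3/2}(ξ) acts as multiplication by ‖ξ‖² on E^{3/2}(ξ) = {Φ ∈ ker γ : ξ⌟Φ = 0}. -/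
noncomputable section

variable {V E F : Type*}
  [NormedAddCommGroup V] [InnerProductSpace ℝ V]
  [NormedAddCommGroup E] [InnerProductSpace ℂ E] [FiniteDimensional ℂ E]
  [NormedAddCommGroup F] [InnerProductSpace ℂ F] [FiniteDimensional ℂ F]

/-- For every `ξ ∈ V` and every `Φ ∈ ker γ` with `ξ⌟Φ = 0`,
`(id − ι∘γ)((id⊗σ(ξ)*)((id − ι̃∘γ̃)((id⊗σ(ξ))(Φ)))) = ‖ξ‖²·Φ`; that is,
`σ_{3/2}(ξ)* σ_{3/2}(ξ)` acts as multiplication by `‖ξ‖²` on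
`E^{3/2}(ξ) = {Φ ∈ ker γ : ξ⌟Φ = 0}`. -/
theorem RS_symbol_on_E32_xi
    (n : ℕ) (hn : 3 ≤ n) (e : OrthonormalBasis (Fin n) ℝ V)
    (σ : V →ₗ[ℝ] (E →ₗ[ℂ] F))
    (hcl : ∀ ξ η : V, ∀ v : E,
      LinearMap.adjoint (σ ξ) (σ η v) + LinearMap.adjoint (σ η) (σ ξ v)
        = (2 * (inner ℝ ξ η : ℝ)) • v) :
    ∀ (ξ : V) (Φ : Fin n → E), gam σ e Φ = 0 → contr e ξ Φ = 0 →
      (fun i => (fun j => LinearMap.adjoint (σ ξ)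
            ((fun k => σ ξ (Φ k)) j - iotT σ e (gamT σ e (fun k => σ ξ (Φ k))) j)) i
          - iot σ e (gam σ e (fun j => LinearMap.adjoint (σ ξ)
            ((fun k => σ ξ (Φ k)) j - iotT σ e (gamT σ e (fun k => σ ξ (Φ k))) j))) i)
        = ‖ξ‖ ^ 2 • Φ := by
  intro ξ Φ hγ hc
  have hsq : ∀ v : E, LinearMap.adjoint (σ ξ) (σ ξ v) = ‖ξ‖ ^ 2 • v := by
    intro v
    have h := hcl ξ ξ v
    rw [real_inner_self_eq_norm_sq] at h
    have h2 : (2:ℝ) • LinearMap.adjoint (σ ξ) (σ ξ v) = (2:ℝ) • (‖ξ‖^2 • v) := by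
      rw [two_smul, smul_smul]; exact h
    exact smul_right_injective E (by norm_num) h2
  have hT : gamT σ e (fun k => σ ξ (Φ k)) = 0 := by
    have key : ∀ i : Fin n, LinearMap.adjoint (σ (e i)) (σ ξ (Φ i))
        = (2 * (inner ℝ (e i) ξ : ℝ)) • Φ i - LinearMap.adjoint (σ ξ) (σ (e i) (Φ i)) := by
      intro i
      have h := hcl (e i) ξ (Φ i)
      rw [add_comm] at h
      exact eq_sub_of_add_eq' h
    unfold gamT
    simp only [key]
    rw [Finset.sum_sub_distrib, ← map_sum]
    have : (∑ i, σ (e i) (Φ i)) = gam σ e Φ := rfl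
    rw [this, hγ, map_zero, sub_zero]
    have : (∑ i : Fin n, (2 * (inner ℝ (e i) ξ : ℝ)) • Φ i)
        = (2:ℝ) • ∑ i : Fin n, (inner ℝ ξ (e i) : ℝ) • Φ i := by
      rw [Finset.smul_sum]
      refine Finset.sum_congr rfl fun i _ => ?_
      rw [mul_smul, real_inner_comm]
    rw [this]
    have hc' : (∑ i : Fin n, (inner ℝ ξ (e i) : ℝ) • Φ i) = 0 := hc
    rw [hc', smul_zero]
  rw [hT]
  have hiotT0 : ∀ j, iotT σ e (0 : E) j = 0 := by
    intro j; simp [iotT]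
  funext i
  simp only [hiotT0, sub_zero, hsq]
  have hg : gam σ e (fun j => ‖ξ‖ ^ 2 • Φ j) = 0 := by
    unfold gam
    have : ∀ j : Fin n, σ (e j) (‖ξ‖ ^ 2 • Φ j) = ‖ξ‖ ^ 2 • σ (e j) (Φ j) := fun j =>
      (σ (e j)).map_smul_of_tower _ _
    simp only [this, ← Finset.smul_sum]
    have : (∑ j, σ (e j) (Φ j)) = gam σ e Φ := rfl
    rw [this, hγ, smul_zero]
  rw [hg]
  simp [iot]
end
end

section
/- For every ξ ∈ V and every v ∈ E one has ξ⌟((id − ι∘γ)(ξ⊗v)) = ((n−1)/n)·‖ξ‖²·v. -/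
noncomputable section

variable {V E F : Type*}
  [NormedAddCommGroup V] [InnerProductSpace ℝ V]
  [NormedAddCommGroup E] [InnerProductSpace ℂ E] [FiniteDimensional ℂ E]
  [NormedAddCommGroup F] [InnerProductSpace ℂ F] [FiniteDimensional ℂ F]

/-- For every `ξ ∈ V` and every `v ∈ E`,
`ξ⌟((id − ι∘γ)(ξ⊗v)) = ((n−1)/n)·‖ξ‖²·v`. -/
theorem contraction_of_projected_tensor
    (n : ℕ) (hn : 3 ≤ n) (e : OrthonormalBasis (Fin n) ℝ V)
    (σ : V →ₗ[ℝ] (E →ₗ[ℂ] F))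
    (hcl : ∀ ξ η : V, ∀ v : E,
      LinearMap.adjoint (σ ξ) (σ η v) + LinearMap.adjoint (σ η) (σ ξ v)
        = (2 * (inner ℝ ξ η : ℝ)) • v) :
    ∀ (ξ : V) (v : E),
      contr e ξ (tensOf e ξ v - iot σ e (gam σ e (tensOf e ξ v)))
        = ((((n : ℝ) - 1) / (n : ℝ)) * ‖ξ‖ ^ 2) • v := by
  intro ξ v
  have hn0 : (n : ℝ) ≠ 0 := by
    have : 0 < n := by omega
    exact_mod_cast this.ne'
  set c : Fin n → ℝ := fun i => (inner ℝ ξ (e i) : ℝ) with hc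
  set A : Fin n → Fin n → E := fun i j => LinearMap.adjoint (σ (e i)) (σ (e j) v) with hA
  have hsum : ∑ i, c i * c i = ‖ξ‖ ^ 2 := by
    have h := e.sum_inner_mul_inner ξ ξ
    simp only [real_inner_comm ξ] at h ⊢
    rw [h, real_inner_self_eq_norm_sq]
  have hS : ∑ i, ∑ j, (c i * c j) • A i j = (‖ξ‖ ^ 2 : ℝ) • v := by
    have h2 : (2:ℝ) • (∑ i, ∑ j, (c i * c j) • A i j) = (2:ℝ) • ((‖ξ‖ ^ 2 : ℝ) • v) := by
      rw [two_smul]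
      nth_rewrite 2 [Finset.sum_comm]
      have hmc : ∀ j i, (c j * c i) • A j i = (c i * c j) • A j i := by
        intro j i; rw [mul_comm]
      simp only [hmc]
      rw [← Finset.sum_add_distrib]
      simp only [← Finset.sum_add_distrib, ← smul_add]
      have horth : ∀ i j : Fin n, (inner ℝ (e i) (e j) : ℝ) = if i = j then 1 else 0 := by
        intro i j
        rcases eq_or_ne i j with h | h
        · simp [h, real_inner_self_eq_norm_sq, e.orthonormal.1]
        · simp [h, e.orthonormal.2 h]
      have key : ∀ i j, A i j + A j i = (2 * (inner ℝ (e i) (e j) : ℝ)) • v := fun i j => hcl _ _ v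
      simp only [key, horth, mul_ite, mul_one, mul_zero, ite_smul, zero_smul, smul_ite,
        smul_zero, Finset.sum_ite_eq, Finset.mem_univ, if_true]
      rw [← Finset.sum_smul, hsum, smul_comm]
    have := congrArg (fun x : E => (2:ℝ)⁻¹ • x) h2
    simpa [smul_smul] using this
  have hadj : ∀ i, LinearMap.adjoint (σ (e i)) (gam σ e (tensOf e ξ v))
      = ∑ j, c j • A i j := by
    intro i
    rw [gam, map_sum]
    refine Finset.sum_congr rfl fun j _ => ?_
    rw [tensOf]
    rw [(σ (e j)).map_smul_of_tower, (LinearMap.adjoint (σ (e i))).map_smul_of_tower]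
  rw [contr]
  have hterm : ∀ i, (inner ℝ ξ (e i) : ℝ) •
      (tensOf e ξ v - iot σ e (gam σ e (tensOf e ξ v))) i
      = c i • c i • v - (1 / (n:ℂ)) • ∑ j, (c i * c j) • A i j := by
    intro i
    have : (tensOf e ξ v - iot σ e (gam σ e (tensOf e ξ v))) i
        = c i • v - (1 / (n:ℂ)) • ∑ j, c j • A i j := by
      simp only [Pi.sub_apply, tensOf, iot, hadj]
      rfl
    rw [this, smul_sub, smul_comm (c i) ((1:ℂ)/(n:ℂ)), Finset.smul_sum]
    simp only [smul_smul]
    rfl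
  simp only [hterm]
  rw [Finset.sum_sub_distrib, ← Finset.smul_sum, hS]
  simp only [smul_smul]
  rw [← Finset.sum_smul, hsum]
  have hcast : ((1:ℂ) / (n:ℂ)) • ((‖ξ‖ ^ 2 : ℝ) • v) = ((1 / (n:ℝ)) * ‖ξ‖ ^ 2) • v := by
    rw [RCLike.real_smul_eq_coe_smul (K := ℂ) (‖ξ‖ ^ 2),
      RCLike.real_smul_eq_coe_smul (K := ℂ) (1 / (n:ℝ) * ‖ξ‖ ^ 2), smul_smul]
    congr 1
    push_cast
    ring
  rw [hcast, ← sub_smul]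
  congr 1
  field_simp
end
end

section
/- The Rarita–Schwinger operator is elliptic: for every ξ ∈ V with ξ ≠ 0 and every Φ ∈ ker γ, if (id − ι̃∘γ̃)((id⊗σ(ξ))(Φ)) = 0 then Φ = 0; i.e. σ_{3/2}(ξ) : E^{3/2} → W_F is injective for ξ ≠ 0. -/
noncomputable section

variable {V E F : Type*}
  [NormedAddCommGroup V] [InnerProductSpace ℝ V]
  [NormedAddCommGroup E] [InnerProductSpace ℂ E] [FiniteDimensional ℂ E]
  [NormedAddCommGroup F] [InnerProductSpace ℂ F] [FiniteDimensional ℂ F]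

/-- The Rarita–Schwinger operator is elliptic: for every `ξ ∈ V` with
`ξ ≠ 0` and every `Φ ∈ ker γ`, if `(id − ι̃∘γ̃)((id⊗σ(ξ))(Φ)) = 0` then `Φ = 0`;
i.e. `σ_{3/2}(ξ) : E^{3/2} → W_F` is injective for `ξ ≠ 0`. -/
theorem RS_symbol_injective
    (n : ℕ) (hn : 3 ≤ n) (e : OrthonormalBasis (Fin n) ℝ V)
    (σ : V →ₗ[ℝ] (E →ₗ[ℂ] F))
    (hcl : ∀ ξ η : V, ∀ v : E,
      LinearMap.adjoint (σ ξ) (σ η v) + LinearMap.adjoint (σ η) (σ ξ v)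
        = (2 * (inner ℝ ξ η : ℝ)) • v) :
    ∀ ξ : V, ξ ≠ 0 → ∀ Φ : Fin n → E, gam σ e Φ = 0 →
      ((fun j => σ ξ (Φ j)) - iotT σ e (gamT σ e (fun j => σ ξ (Φ j)))) = 0 →
      Φ = 0 := by
  
  intro ξ hξ Φ hγ h
  set c : ℝ := inner ℝ ξ ξ with hc
  have hc0 : c ≠ 0 := inner_self_ne_zero.mpr hξ
  -- σ(ξ)*σ(ξ) = c • id
  have hsq : ∀ v : E, LinearMap.adjoint (σ ξ) (σ ξ v) = c • v := by
    intro v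
    have h1 := hcl ξ ξ v
    have h2 : (2:ℝ) • LinearMap.adjoint (σ ξ) (σ ξ v) = (2:ℝ) • (c • v) := by
      rw [two_smul, smul_smul]
      rw [← hc] at h1
      simpa using h1
    exact smul_right_injective E two_ne_zero h2
  set w : E := gamT σ e (fun j => σ ξ (Φ j)) with hw
  have hΦj : ∀ j, σ ξ (Φ j) = (1/(n:ℂ)) • σ (e j) w := by
    intro j
    have h' := congrFun h j
    rw [Pi.sub_apply, Pi.zero_apply, sub_eq_zero] at h'
    simpa [iotT] using h'
  set u : E := contr e ξ Φ with hu
  -- expansion lemma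
  have hexp : ∀ v : E, ∑ j, (inner ℝ ξ (e j) : ℝ) • σ (e j) v = σ ξ v := by
    intro v
    have h1 : ∑ j, (inner ℝ ξ (e j) : ℝ) • σ (e j) v
        = σ (∑ j, (inner ℝ ξ (e j) : ℝ) • e j) v := by
      simp [map_sum, LinearMap.sum_apply]
    rw [h1, show (∑ j, (inner ℝ ξ (e j) : ℝ) • e j) = ξ from by
      simpa [real_inner_comm] using e.sum_repr' ξ]
  -- step 1 : w = 2 • u
  have hw2 : w = (2:ℝ) • u := by
    have hterm : ∀ i, LinearMap.adjoint (σ (e i)) (σ ξ (Φ i))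
        = (2 * (inner ℝ ξ (e i) : ℝ)) • Φ i - LinearMap.adjoint (σ ξ) (σ (e i) (Φ i)) := by
      intro i
      have h1 := hcl (e i) ξ (Φ i)
      rw [real_inner_comm] at h1
      exact eq_sub_of_add_eq h1
    calc w = ∑ i, ((2 * (inner ℝ ξ (e i):ℝ)) • Φ i - LinearMap.adjoint (σ ξ) (σ (e i) (Φ i))) := by
            rw [hw, gamT]; exact Finset.sum_congr rfl fun i _ => hterm i
      _ = (2:ℝ) • u - LinearMap.adjoint (σ ξ) (gam σ e Φ) := by
            rw [Finset.sum_sub_distrib, hu, contr, gam, map_sum, Finset.smul_sum]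
            congr 1
            exact Finset.sum_congr rfl fun i _ => (mul_smul 2 _ _)
      _ = (2:ℝ) • u := by rw [hγ, map_zero, sub_zero]
  -- step 2 : σ ξ u = (1/n) • σ ξ w
  have hsum : σ ξ u = (1/(n:ℂ)) • σ ξ w := by
    have e1 : σ ξ u = ∑ j, (inner ℝ ξ (e j) : ℝ) • σ ξ (Φ j) := by
      rw [hu, contr, map_sum]
      exact Finset.sum_congr rfl fun j _ => ((σ ξ).map_smul_of_tower _ _)
    rw [e1]
    calc ∑ j, (inner ℝ ξ (e j):ℝ) • σ ξ (Φ j)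
        = ∑ j, (inner ℝ ξ (e j):ℝ) • ((1/(n:ℂ)) • σ (e j) w) := by
          exact Finset.sum_congr rfl fun j _ => by rw [hΦj j]
      _ = (1/(n:ℂ)) • ∑ j, (inner ℝ ξ (e j):ℝ) • σ (e j) w := by
          rw [Finset.smul_sum]
          exact Finset.sum_congr rfl fun j _ => (smul_comm _ _ _)
      _ = (1/(n:ℂ)) • σ ξ w := by rw [hexp w]
  -- apply adjoint
  have key : (c:ℂ) • u = ((1:ℂ)/(n:ℂ)) • ((c:ℂ) • w) := by
    have := congrArg (LinearMap.adjoint (σ ξ)) hsum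
    rw [map_smul, hsq u, hsq w] at this
    simpa [Complex.coe_smul] using this
  have hn0 : (n:ℂ) ≠ 0 := Nat.cast_ne_zero.mpr (by omega)
  have key2 : ((c:ℂ) * (1 - 2/(n:ℂ))) • u = 0 := by
    have hwc : w = (2:ℂ) • u := by
      rw [hw2, ← Complex.coe_smul]; norm_num
    rw [hwc] at key
    simp only [smul_smul] at key
    have : (c:ℂ) • u - ((1:ℂ)/(n:ℂ) * ((c:ℂ) * 2)) • u = 0 := sub_eq_zero.mpr key
    rw [← sub_smul] at this
    convert this using 2
    field_simp
  have hcoef : ((c:ℂ) * (1 - 2/(n:ℂ))) ≠ 0 := by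
    apply mul_ne_zero
    · exact_mod_cast Complex.ofReal_ne_zero.mpr hc0
    · intro hcon
      have h2n : (n:ℂ) = 2 := by
        field_simp at hcon
        linear_combination hcon
      have : n = 2 := by exact_mod_cast h2n
      omega
  have hu0 : u = 0 := by
    have := smul_eq_zero.mp key2
    tauto
  have hw0 : w = 0 := by rw [hw2, hu0, smul_zero]
  funext j
  have hz : σ ξ (Φ j) = 0 := by rw [hΦj j, hw0, map_zero, smul_zero]
  have : c • Φ j = 0 := by rw [← hsq (Φ j), hz, map_zero]
  have := smul_eq_zero.mp this
  simp only [Pi.zero_apply]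
  tauto
end
end
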